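/- Backward positivity of the adjoint: if λ: [0,T] → ℝ^N satisfies the adjoint system dλ_i/dt = -w_i + y_i(t)λ_i + (λ_i/x_i(t))(a_i + β Σ_j A_{ji} C_j(t)) - β Σ_j A_{ij}(1 - C_j(t))λ_j(t)/x_j(t) with terminal condition λ(T) = 0, continuous coefficients, C(t) ∈ [0,1]^N, admissible bounded controls, and w_i > 0 for all i, then λ_i(t) ≥ 0 for all t ∈ [0,T] and all i. -/

import Mathlib

set_option maxHeartbeats 2000000

theorem stmt_15 (N : ℕ) (hN : 1 ≤ N) (T : ℝ) (hT : 0 < T)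
    (A : Fin N → Fin N → ℝ) (hA : ∀ i j, A i j = 0 ∨ A i j = 1)
    (a : Fin N → ℝ) (ha : ∀ i, 0 ≤ a i) (β : ℝ) (hβ : 0 < β)
    (w : Fin N → ℝ) (hw : ∀ i, 0 < w i)
    (x y : ℝ → Fin N → ℝ) (xlow xup ylow yup : ℝ) (hxl : 0 < xlow)
    (hxc : ∀ i, ContinuousOn (fun t => x t i) (Set.Icc 0 T))
    (hyc : ∀ i, ContinuousOn (fun t => y t i) (Set.Icc 0 T))
    (hx1 : ∀ t ∈ Set.Icc (0 : ℝ) T, ∀ i, xlow ≤ x t i)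
    (hx2 : ∀ t ∈ Set.Icc (0 : ℝ) T, ∀ i, x t i ≤ xup)
    (hy1 : ∀ t ∈ Set.Icc (0 : ℝ) T, ∀ i, ylow ≤ y t i)
    (hy2 : ∀ t ∈ Set.Icc (0 : ℝ) T, ∀ i, y t i ≤ yup)
    (C : ℝ → Fin N → ℝ)
    (hCc : ∀ i, ContinuousOn (fun t => C t i) (Set.Icc 0 T))
    (hCrange : ∀ t ∈ Set.Icc (0 : ℝ) T, ∀ i, C t i ∈ Set.Icc (0 : ℝ) 1)
    (lam : ℝ → Fin N → ℝ) (hlamT : lam T = 0)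
    (hadj : ∀ t ∈ Set.Icc (0 : ℝ) T, ∀ i,
      HasDerivWithinAt (fun s => lam s i)
        (-w i + y t i * lam t i +
          (lam t i / x t i) * (a i + β * ∑ j, A j i * C t j) -
          β * ∑ j, A i j * (1 - C t j) * lam t j / x t j)
        (Set.Icc 0 T) t) :
    ∀ t ∈ Set.Icc (0 : ℝ) T, ∀ i, 0 ≤ lam t i := by
  by_contra hcon
  push_neg at hcon
  obtain ⟨t₀, ht₀, i₀, hi₀⟩ := hcon
  have hne : (Finset.univ : Finset (Fin N)).Nonempty := ⟨⟨0, hN⟩, Finset.mem_univ _⟩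
  obtain ⟨Y, hYdef⟩ : ∃ v : ℝ, v = max |ylow| |yup| := ⟨_, rfl⟩
  obtain ⟨amax, hamaxdef⟩ : ∃ v : ℝ, v = Finset.univ.sup' hne a := ⟨_, rfl⟩
  obtain ⟨M, hMdef⟩ : ∃ v : ℝ, v = Y + (amax + β * N) / xlow := ⟨_, rfl⟩
  obtain ⟨wmin, hwmindef⟩ : ∃ v : ℝ, v = Finset.univ.inf' hne w := ⟨_, rfl⟩
  obtain ⟨K, hKdef⟩ : ∃ v : ℝ, v = β * N / xlow := ⟨_, rfl⟩
  obtain ⟨δ, hδdef⟩ : ∃ v : ℝ, v = wmin / (2 * M + K + 1) := ⟨_, rfl⟩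
  obtain ⟨δ', hδ'def⟩ : ∃ v : ℝ, v = min δ (-(lam t₀ i₀)) := ⟨_, rfl⟩
  have hY0 : 0 ≤ Y := by rw [hYdef]; exact le_trans (abs_nonneg ylow) (le_max_left _ _)
  have hamax : ∀ i, a i ≤ amax := by
    intro i; rw [hamaxdef]; exact Finset.le_sup' a (Finset.mem_univ i)
  have hamax0 : 0 ≤ amax := le_trans (ha ⟨0, hN⟩) (hamax ⟨0, hN⟩)
  have hM0 : 0 ≤ M := by
    have h : 0 ≤ (amax + β * N) / xlow := by positivity
    rw [hMdef]; linarith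
  have hK0 : 0 ≤ K := by rw [hKdef]; positivity
  have hwi : ∀ i, wmin ≤ w i := by
    intro i; rw [hwmindef]; exact Finset.inf'_le w (Finset.mem_univ i)
  have hwmin : 0 < wmin := by
    rw [hwmindef, Finset.lt_inf'_iff]
    exact fun i _ => hw i
  have hden : (0:ℝ) < 2 * M + K + 1 := by linarith
  have hδpos : 0 < δ := by rw [hδdef]; exact div_pos hwmin hden
  have hδ'pos : 0 < δ' := hδ'def ▸ lt_min hδpos (by linarith)
  have hδ'δ : δ' ≤ δ := hδ'def ▸ min_le_left _ _
  have hwδ : (2 * M + K) * δ ≤ wmin := by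
    have h1 : (2 * M + K + 1) * δ = wmin := by
      rw [hδdef]; field_simp
    nlinarith [hδpos.le]
  -- continuity of lambda components
  have hlamc : ∀ i, ContinuousOn (fun t => lam t i) (Set.Icc 0 T) :=
    fun i t ht => (hadj t ht i).continuousWithinAt
  have hsubI : Set.Icc t₀ T ⊆ Set.Icc 0 T := Set.Icc_subset_Icc ht₀.1 le_rfl
  -- the bad set and its greatest element
  obtain ⟨S, hSdef⟩ : ∃ v : Set ℝ, v = ⋃ i : Fin N, (Set.Icc t₀ T ∩ (fun t => lam t i) ⁻¹' Set.Iic (-δ')) := ⟨_, rfl⟩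
  have hSclosed : IsClosed S := hSdef ▸
    isClosed_iUnion_of_finite fun i =>
      ((hlamc i).mono hsubI).preimage_isClosed_of_isClosed isClosed_Icc isClosed_Iic
  have hSsub : S ⊆ Set.Icc t₀ T := by
    rw [hSdef]
    intro t ht
    obtain ⟨i, hti⟩ := Set.mem_iUnion.1 ht
    exact hti.1
  have ht₀S : t₀ ∈ S := by
    rw [hSdef]
    refine Set.mem_iUnion.2 ⟨i₀, ⟨Set.left_mem_Icc.2 ht₀.2, ?_⟩⟩
    have : δ' ≤ -(lam t₀ i₀) := hδ'def ▸ min_le_right _ _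
    simp only [Set.mem_preimage, Set.mem_Iic]
    linarith
  have hScomp : IsCompact S := isCompact_Icc.of_isClosed_subset hSclosed hSsub
  obtain ⟨s, hsS, hsgr⟩ := hScomp.exists_isGreatest ⟨t₀, ht₀S⟩
  rw [hSdef] at hsS
  obtain ⟨i₁, hsi₁⟩ := Set.mem_iUnion.1 hsS
  have hsIcc : s ∈ Set.Icc t₀ T := hsi₁.1
  have hsi : lam s i₁ ≤ -δ' := hsi₁.2
  have hs0 : 0 ≤ s := le_trans ht₀.1 hsIcc.1
  have hsT : s < T := by
    rcases lt_or_eq_of_le hsIcc.2 with h | h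
    · exact h
    · exfalso
      rw [h, hlamT] at hsi
      simp at hsi
      linarith
  -- strictly after s, all components exceed -δ'
  have hout : ∀ t ∈ Set.Ioc s T, ∀ j, -δ' < lam t j := by
    intro t ht j
    by_contra h
    push_neg at h
    have htS : t ∈ S := by
      rw [hSdef]
      refine Set.mem_iUnion.2 ⟨j, ⟨⟨le_trans hsIcc.1 ht.1.le, ht.2⟩, ?_⟩⟩
      simpa using h
    exact absurd (hsgr htS) (not_le.2 ht.1)
  -- the rescaled function
  obtain ⟨u, hudef⟩ : ∃ v : ℝ → ℝ, v = fun t => lam t i₁ * Real.exp (-M * t) := ⟨_, rfl⟩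
  have hu_cont : ContinuousOn u (Set.Icc s T) := by
    rw [hudef]
    refine ContinuousOn.mul ((hlamc i₁).mono (Set.Icc_subset_Icc hs0 le_rfl)) ?_
    exact (Real.continuous_exp.comp (continuous_const.mul continuous_id)).continuousOn
  -- derivative estimate at interior points
  have hkey : ∀ t ∈ Set.Ioo s T, ∃ d : ℝ, HasDerivAt u d t ∧ d ≤ 0 := by
    intro t ht
    have ht0 : 0 < t := lt_of_le_of_lt hs0 ht.1
    have htIcc : t ∈ Set.Icc (0:ℝ) T := ⟨ht0.le, ht.2.le⟩
    have hnhds : Set.Icc (0:ℝ) T ∈ nhds t := Icc_mem_nhds ht0 ht.2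
    have hd := (hadj t htIcc i₁).hasDerivAt hnhds
    have hexp : HasDerivAt (fun r => Real.exp (-M * r)) (Real.exp (-M * t) * (-M)) t := by
      simpa using (HasDerivAt.exp ((hasDerivAt_id t).const_mul (-M)))
    refine ⟨((-w i₁ + y t i₁ * lam t i₁ +
          (lam t i₁ / x t i₁) * (a i₁ + β * ∑ j, A j i₁ * C t j) -
          β * ∑ j, A i₁ j * (1 - C t j) * lam t j / x t j)
        - M * lam t i₁) * Real.exp (-M * t), ?_, ?_⟩
    · rw [hudef]
      have : HasDerivAt (fun r => lam r i₁ * Real.exp (-M * r)) _ t := hd.mul hexp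
      convert this using 1
      ring
    · -- the sign estimate
      have hlamlb : ∀ j, -δ ≤ lam t j := by
        intro j
        have := hout t ⟨ht.1, ht.2.le⟩ j
        linarith
      have hxt : ∀ j, xlow ≤ x t j := hx1 t htIcc
      have hxpos : ∀ j, 0 < x t j := fun j => lt_of_lt_of_le hxl (hxt j)
      have hC01 : ∀ j, C t j ∈ Set.Icc (0:ℝ) 1 := hCrange t htIcc
      -- bound on S1
      have hS1ub : (∑ j, A j i₁ * C t j) ≤ N := by
        calc (∑ j, A j i₁ * C t j) ≤ ∑ _j : Fin N, (1:ℝ) := by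
              refine Finset.sum_le_sum fun j _ => ?_
              rcases hA j i₁ with h | h <;> rcases hC01 j with ⟨h1, h2⟩ <;> rw [h] <;> nlinarith
          _ = N := by simp
      have hS1lb : (0:ℝ) ≤ ∑ j, A j i₁ * C t j := by
        refine Finset.sum_nonneg fun j _ => ?_
        rcases hA j i₁ with h | h <;> rcases hC01 j with ⟨h1, h2⟩ <;> rw [h] <;> nlinarith
      -- bound on the "c" coefficient
      have hQub : (a i₁ + β * ∑ j, A j i₁ * C t j) / x t i₁ ≤ (amax + β * N) / xlow := by
        have hnum : a i₁ + β * ∑ j, A j i₁ * C t j ≤ amax + β * N := by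
          nlinarith [hamax i₁]
        have hnum0 : 0 ≤ amax + β * (N : ℝ) := by positivity
        exact div_le_div₀ hnum0 hnum hxl (hxt i₁)
      have hQlb : 0 ≤ (a i₁ + β * ∑ j, A j i₁ * C t j) / x t i₁ :=
        div_nonneg (by nlinarith [ha i₁]) (hxpos i₁).le
      have hyub : y t i₁ ≤ Y := by
        rw [hYdef]
        exact le_trans (hy2 t htIcc i₁) (le_trans (le_abs_self _) (le_max_right _ _))
      have hylb : -Y ≤ y t i₁ := by
        have := hy1 t htIcc i₁
        have h2 : -|ylow| ≤ ylow := neg_abs_le _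
        have h3 : |ylow| ≤ Y := by rw [hYdef]; exact le_max_left _ _
        linarith
      obtain ⟨c, hcdef⟩ : ∃ v : ℝ, v = y t i₁ + (a i₁ + β * ∑ j, A j i₁ * C t j) / x t i₁ := ⟨_, rfl⟩
      have hcub : c ≤ M := by rw [hcdef, hMdef]; linarith
      have hclb : -M ≤ c := by
        rw [hcdef]
        have : 0 ≤ (amax + β * N) / xlow := by positivity
        rw [hMdef]; linarith
      -- diagonal part estimate
      have hdiag : lam t i₁ * c - M * lam t i₁ ≤ 2 * M * δ := by
        rcases le_or_gt 0 (lam t i₁) with h | h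
        · nlinarith
        · have h1 : -(lam t i₁) ≤ δ := by linarith [hlamlb i₁]
          have h2 : M - c ≤ 2 * M := by linarith
          nlinarith [mul_le_mul h1 h2 (by linarith) hδpos.le]
      -- coupling part estimate
      have hS2 : -(N * (δ / xlow)) ≤ ∑ j, A i₁ j * (1 - C t j) * lam t j / x t j := by
        have hterm : ∀ j ∈ Finset.univ, -(δ / xlow) ≤ A i₁ j * (1 - C t j) * lam t j / x t j := by
          intro j _
          have hα0 : 0 ≤ A i₁ j * (1 - C t j) := by
            rcases hA i₁ j with h | h <;> rcases hC01 j with ⟨h1, h2⟩ <;> rw [h] <;> nlinarith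
          have hα1 : A i₁ j * (1 - C t j) ≤ 1 := by
            rcases hA i₁ j with h | h <;> rcases hC01 j with ⟨h1, h2⟩ <;> rw [h] <;> nlinarith
          have hxj := hxpos j
          rcases le_or_gt 0 (lam t j) with h | h
          · have : 0 ≤ A i₁ j * (1 - C t j) * lam t j / x t j :=
              div_nonneg (by nlinarith) hxj.le
            have : 0 ≤ δ / xlow := by positivity
            linarith
          · have h1 : A i₁ j * (1 - C t j) * (-(lam t j)) / x t j ≤ δ / xlow := by
              have hl : -(lam t j) ≤ δ := by linarith [hlamlb j]
              have hnum : A i₁ j * (1 - C t j) * (-(lam t j)) ≤ δ := by nlinarith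
              exact div_le_div₀ hδpos.le hnum hxl (hxt j)
            have h2 : A i₁ j * (1 - C t j) * (-(lam t j)) / x t j
                = -(A i₁ j * (1 - C t j) * lam t j / x t j) := by ring
            linarith
        have := Finset.sum_le_sum hterm
        have hcard : (∑ _j : Fin N, -(δ / xlow)) = -(N * (δ / xlow)) := by
          simp [Finset.sum_const, Finset.card_univ, nsmul_eq_mul]
        linarith [hcard ▸ this]
      have hcoup : -(β * ∑ j, A i₁ j * (1 - C t j) * lam t j / x t j) ≤ K * δ := by
        have h1 : β * (-(N * (δ / xlow))) ≤ β * ∑ j, A i₁ j * (1 - C t j) * lam t j / x t j :=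
          mul_le_mul_of_nonneg_left hS2 hβ.le
        have h2 : β * (-(N * (δ / xlow))) = -(K * δ) := by
          rw [hKdef]; field_simp
        linarith
      -- combine
      have hexppos : 0 < Real.exp (-M * t) := Real.exp_pos _
      have htotal : (-w i₁ + y t i₁ * lam t i₁ +
          (lam t i₁ / x t i₁) * (a i₁ + β * ∑ j, A j i₁ * C t j) -
          β * ∑ j, A i₁ j * (1 - C t j) * lam t j / x t j)
          - M * lam t i₁ ≤ 0 := by
        have hrw : (-w i₁ + y t i₁ * lam t i₁ +
            (lam t i₁ / x t i₁) * (a i₁ + β * ∑ j, A j i₁ * C t j) -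
            β * ∑ j, A i₁ j * (1 - C t j) * lam t j / x t j)
            - M * lam t i₁
            = -w i₁ + (lam t i₁ * c - M * lam t i₁)
              + (-(β * ∑ j, A i₁ j * (1 - C t j) * lam t j / x t j)) := by
          rw [hcdef]; ring
        rw [hrw]
        linarith [hwi i₁]
      nlinarith [htotal, hexppos.le]
  -- AntitoneOn and contradiction
  have hanti : AntitoneOn u (Set.Icc s T) := by
    apply antitoneOn_of_deriv_nonpos (convex_Icc s T) hu_cont
    · intro t ht
      rw [interior_Icc] at ht
      obtain ⟨d, hd, _⟩ := hkey t ht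
      exact hd.differentiableAt.differentiableWithinAt
    · intro t ht
      rw [interior_Icc] at ht
      obtain ⟨d, hd, hd0⟩ := hkey t ht
      rw [hd.deriv]
      exact hd0
  have h1 : u T ≤ u s := hanti (Set.left_mem_Icc.2 hsT.le) (Set.right_mem_Icc.2 hsT.le) hsT.le
  have h2 : u T = 0 := by rw [hudef]; simp [hlamT]
  have h3 : u s < 0 := by
    rw [hudef]
    exact mul_neg_of_neg_of_pos (by linarith) (Real.exp_pos _)
  linarith
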